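/- Let s > 0, η > 0, N ≥ 2, and w_η(x,y) = max(|x-y|, η)^{-s}. Suppose (r₁ᵏ, ..., r_Nᵏ) is a sequence of configurations in ℝᵈ such that |rᵢᵏ| → ∞ for i = 1, ..., J (with 2 ≤ J ≤ N) and rᵢᵏ → r̄ᵢ for i = J+1, ..., N, and suppose the inequality Σ_{i=2}^N w_η(r₁, rᵢ) + Σ_{i=2}^N w_η(r₁ᵏ, rᵢᵏ) ≤ Σ_{i=2}^N w_η(r₁ᵏ, rᵢ) + Σ_{i=2}^N w_η(r₁, rᵢᵏ) holds for all k and all configurations (r₁, ..., r_N) in a set Γ containing all the (r₁ᵏ, ..., r_Nᵏ). Then, in the limit k → ∞, for all (r₁, ..., r_N) ∈ Γ: Σ_{i=2}^N w_η(r₁, rᵢ) ≤ Σ_{i=J+1}^N w_η(r₁, r̄ᵢ). -/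

import Mathlib

open Filter Finset

noncomputable def weta (d : ℕ) (s η : ℝ)
    (x y : EuclideanSpace ℝ (Fin d)) : ℝ :=
  (max ‖x - y‖ η) ^ (-s)

lemma weta_nonneg {d : ℕ} {s η : ℝ} (hη : 0 < η)
    (x y : EuclideanSpace ℝ (Fin d)) : 0 ≤ weta d s η x y :=
  Real.rpow_nonneg (le_trans hη.le (le_max_right _ _)) _

lemma weta_tendsto_zero {d : ℕ} {s η : ℝ} (hs : 0 < s)
    {f g : ℕ → EuclideanSpace ℝ (Fin d)}
    (hfg : Tendsto (fun k => ‖f k - g k‖) atTop atTop) :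
    Tendsto (fun k => weta d s η (f k) (g k)) atTop (nhds 0) := by
  have h1 : Tendsto (fun k => max ‖f k - g k‖ η) atTop atTop :=
    tendsto_atTop_mono (fun k => le_max_left _ _) hfg
  have := (tendsto_rpow_neg_atTop hs).comp h1
  simpa [weta, Function.comp_def] using this

lemma weta_tendsto_zero_left {d : ℕ} {s η : ℝ} (hs : 0 < s)
    {f : ℕ → EuclideanSpace ℝ (Fin d)}
    (hf : Tendsto (fun k => ‖f k‖) atTop atTop)
    (y : EuclideanSpace ℝ (Fin d)) :
    Tendsto (fun k => weta d s η (f k) y) atTop (nhds 0) := by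
  apply weta_tendsto_zero hs
  apply tendsto_atTop_mono (fun k => ?_)
    (tendsto_atTop_add_const_right atTop (-‖y‖) hf)
  have := norm_sub_norm_le (f k) y
  linarith

lemma weta_tendsto_zero_right {d : ℕ} {s η : ℝ} (hs : 0 < s)
    {f : ℕ → EuclideanSpace ℝ (Fin d)}
    (hf : Tendsto (fun k => ‖f k‖) atTop atTop)
    (y : EuclideanSpace ℝ (Fin d)) :
    Tendsto (fun k => weta d s η y (f k)) atTop (nhds 0) := by
  have := weta_tendsto_zero_left (η := η) hs hf y
  simpa [weta, norm_sub_rev] using this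

lemma weta_continuousAt {d : ℕ} {s η : ℝ} (hη : 0 < η)
    (x b : EuclideanSpace ℝ (Fin d)) :
    ContinuousAt (fun y => weta d s η x y) b := by
  apply ContinuousAt.rpow_const
  · exact (continuous_const.sub continuous_id).norm.max continuous_const |>.continuousAt
  · left
    exact ne_of_gt (lt_of_lt_of_le hη (le_max_right _ _))

theorem stmt3 (d N J : ℕ) (hN : 2 ≤ N) (hJ : 2 ≤ J) (hJN : J ≤ N)
    (s η : ℝ) (hs : 0 < s) (hη : 0 < η)
    (Γ : Set (Fin N → EuclideanSpace ℝ (Fin d)))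
    (rk : ℕ → Fin N → EuclideanSpace ℝ (Fin d))
    (rbar : Fin N → EuclideanSpace ℝ (Fin d))
    (hmem : ∀ k, rk k ∈ Γ)
    (hesc : ∀ i : Fin N, (i : ℕ) < J →
      Tendsto (fun k => ‖rk k i‖) atTop atTop)
    (hconv : ∀ i : Fin N, J ≤ (i : ℕ) →
      Tendsto (fun k => rk k i) atTop (nhds (rbar i)))
    (hineq : ∀ k, ∀ r ∈ Γ,
      ((∑ i ∈ univ.filter (fun i : Fin N => i ≠ ⟨0, by omega⟩),
          weta d s η (r ⟨0, by omega⟩) (r i)) +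
        ∑ i ∈ univ.filter (fun i : Fin N => i ≠ ⟨0, by omega⟩),
          weta d s η (rk k ⟨0, by omega⟩) (rk k i)) ≤
      ((∑ i ∈ univ.filter (fun i : Fin N => i ≠ ⟨0, by omega⟩),
          weta d s η (rk k ⟨0, by omega⟩) (r i)) +
        ∑ i ∈ univ.filter (fun i : Fin N => i ≠ ⟨0, by omega⟩),
          weta d s η (r ⟨0, by omega⟩) (rk k i))) :
    ∀ r ∈ Γ,
      (∑ i ∈ univ.filter (fun i : Fin N => i ≠ ⟨0, by omega⟩),
        weta d s η (r ⟨0, by omega⟩) (r i)) ≤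
      ∑ i ∈ univ.filter (fun i : Fin N => J ≤ (i : ℕ)),
        weta d s η (r ⟨0, by omega⟩) (rbar i) := by
  intro r hr
  set z : Fin N := ⟨0, by omega⟩ with hz
  set S : Finset (Fin N) := univ.filter (fun i : Fin N => i ≠ z) with hS
  -- key inequality for each k
  have key : ∀ k,
      (∑ i ∈ S, weta d s η (r z) (r i)) ≤
      (∑ i ∈ S, weta d s η (rk k z) (r i)) +
        ∑ i ∈ S, weta d s η (r z) (rk k i) := by
    intro k
    have h := hineq k r hr
    have hA : 0 ≤ ∑ i ∈ S, weta d s η (rk k z) (rk k i) :=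
      Finset.sum_nonneg fun i _ => weta_nonneg hη _ _
    linarith
  -- limits
  have hB : Tendsto (fun k => ∑ i ∈ S, weta d s η (rk k z) (r i)) atTop (nhds 0) := by
    have : Tendsto (fun k => ∑ i ∈ S, weta d s η (rk k z) (r i)) atTop
        (nhds (∑ _i ∈ S, (0:ℝ))) := by
      refine tendsto_finset_sum _ fun i _ => ?_
      exact weta_tendsto_zero_left hs (hesc z (by simp [hz]; omega)) (r i)
    simpa using this
  set L : Fin N → ℝ := fun i => if J ≤ (i : ℕ) then weta d s η (r z) (rbar i) else 0
    with hL
  have hC : Tendsto (fun k => ∑ i ∈ S, weta d s η (r z) (rk k i)) atTop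
      (nhds (∑ i ∈ S, L i)) := by
    refine tendsto_finset_sum _ fun i _ => ?_
    by_cases hi : J ≤ (i : ℕ)
    · have := ((weta_continuousAt (s := s) hη (r z) (rbar i)).tendsto).comp (hconv i hi)
      simpa [hL, hi, Function.comp_def] using this
    · have := weta_tendsto_zero_right (η := η) hs (hesc i (by omega)) (r z)
      simpa [hL, hi] using this
  have hlim : Tendsto (fun k => (∑ i ∈ S, weta d s η (rk k z) (r i)) +
      ∑ i ∈ S, weta d s η (r z) (rk k i)) atTop (nhds (0 + ∑ i ∈ S, L i)) :=
    hB.add hC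
  have hmain : (∑ i ∈ S, weta d s η (r z) (r i)) ≤ 0 + ∑ i ∈ S, L i :=
    le_of_tendsto_of_tendsto tendsto_const_nhds hlim (Eventually.of_forall key)
  -- identify the limit sum with the target sum
  have hsum : ∑ i ∈ S, L i =
      ∑ i ∈ univ.filter (fun i : Fin N => J ≤ (i : ℕ)),
        weta d s η (r z) (rbar i) := by
    have h1 : S = univ.erase z := by
      rw [hS, Finset.filter_ne']
    rw [h1, Finset.sum_erase _ (by simp [hL, hz]; omega)]
    rw [Finset.sum_filter]
  rw [zero_add, hsum] at hmain
  exact hmain
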